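/- Duality upper bound for the fourth-moment problem: for any x₀ > 0 and any χ, if λ₀, λ₁, λ₂ are chosen so that the quadratic q(t) = λ₀ + λ₁ t + λ₂ t² satisfies q(t) ≥ r₀(t, χ) for all t ≥ 0, where r₀(t, χ) = r(√t, χ), then ρ(m₂, κ, χ) ≤ λ₀ + λ₁ m₂ + λ₂ κ m₂² for all valid moment pairs (m₂, κ). In particular, taking the tangent quadratic at x₀, ρ(m₂, κ, χ) ≤ r₀(x₀,χ) + (m₂ - x₀) r₀'(x₀,χ) + ((x₀-m₂)² + (κ-1)m₂²) sup_{x≥0} δ(x; x₀), where δ(x; x₀) = (r₀(x,χ) - r₀(x₀,χ) - (x-x₀)r₀'(x₀,χ))/(x-x₀)² for x ≠ x₀. -/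

import Mathlib

open MeasureTheory ProbabilityTheory Real Set Filter

/-- Standard normal CDF. -/
noncomputable def Phi (x : ℝ) : ℝ := (gaussianReal 0 1 (Set.Iic x)).toReal

/-- Non-coverage function `r(b, χ) = Φ(-χ-b) + Φ(-χ+b)`. -/
noncomputable def r (b χ : ℝ) : ℝ := Phi (-χ - b) + Phi (-χ + b)

/-- `r₀(t, χ) = r(√t, χ)`. -/
noncomputable def r0 (t χ : ℝ) : ℝ := r (Real.sqrt t) χ

lemma Phi_nonneg (x : ℝ) : 0 ≤ Phi x := ENNReal.toReal_nonneg

lemma Phi_le_one (x : ℝ) : Phi x ≤ 1 := by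
  have h : gaussianReal 0 1 (Set.Iic x) ≤ 1 := prob_le_one
  simpa [Phi] using ENNReal.toReal_le_of_le_ofReal zero_le_one (by simpa using h)

lemma Phi_mono : Monotone Phi := fun a b hab =>
  ENNReal.toReal_mono (measure_ne_top _ _) (measure_mono (Iic_subset_Iic.2 hab))

lemma measurable_Phi : Measurable Phi := Phi_mono.measurable

lemma Phi_eq_integral (x : ℝ) : Phi x = ∫ t in Iic x, gaussianPDFReal 0 1 t := by
  rw [Phi, gaussianReal_apply_eq_integral 0 one_ne_zero,
    ENNReal.toReal_ofReal (setIntegral_nonneg measurableSet_Iic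
      (fun t _ => gaussianPDFReal_nonneg 0 1 t))]

lemma continuous_pdf : Continuous (gaussianPDFReal 0 1) := by
  unfold gaussianPDFReal; fun_prop

lemma hasDerivAt_Phi (x : ℝ) : HasDerivAt Phi (gaussianPDFReal 0 1 x) x := by
  have h : ∀ y, Phi y = (∫ t in (0:ℝ)..y, gaussianPDFReal 0 1 t) + Phi 0 := by
    intro y
    rw [Phi_eq_integral, Phi_eq_integral,
      ← intervalIntegral.integral_Iic_sub_Iic ((integrable_gaussianPDFReal 0 1).integrableOn)
        ((integrable_gaussianPDFReal 0 1).integrableOn)]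
    ring
  have := ((continuous_pdf.integral_hasStrictDerivAt 0 x).hasDerivAt).add_const (Phi 0)
  exact this.congr_of_eventuallyEq (Eventually.of_forall fun y => (h y))


/-- Worst-case non-coverage over distributions with second moment `m₂` and kurtosis `κ`. -/
noncomputable def ρ₄ (m₂ κ χ : ℝ) : ℝ :=
  sSup {x | ∃ F : Measure ℝ, IsProbabilityMeasure F ∧
    (∫ b, b ^ 2 ∂F) = m₂ ∧ (∫ b, b ^ 4 ∂F) = κ * m₂ ^ 2 ∧ (∫ b, r b χ ∂F) = x}


lemma r_nonneg (b χ : ℝ) : 0 ≤ r b χ := add_nonneg (Phi_nonneg _) (Phi_nonneg _)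

lemma r_le_two (b χ : ℝ) : r b χ ≤ 2 := by
  have := Phi_le_one (-χ - b); have := Phi_le_one (-χ + b); unfold r; linarith

lemma r_eq_r0_sq (b χ : ℝ) : r b χ = r0 (b ^ 2) χ := by
  rw [r0, Real.sqrt_sq_eq_abs]
  rcases abs_cases b with ⟨h, _⟩ | ⟨h, _⟩
  · rw [h]
  · rw [h, r, r]
    have h1 : -χ - -b = -χ + b := by ring
    have h2 : -χ + -b = -χ - b := by ring
    rw [h1, h2, add_comm]

lemma measurable_r (χ : ℝ) : Measurable (fun b => r b χ) := by
  unfold r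
  exact (measurable_Phi.comp (measurable_const.sub measurable_id)).add
    (measurable_Phi.comp (measurable_const.add measurable_id))

lemma lemA (χ m₂ κ l₀ l₁ l₂ : ℝ) (hm : 0 < m₂) (hκ : 1 < κ)
    (hdom : ∀ t, 0 ≤ t → r0 t χ ≤ l₀ + l₁ * t + l₂ * t ^ 2) :
    ρ₄ m₂ κ χ ≤ l₀ + l₁ * m₂ + l₂ * κ * m₂ ^ 2 := by
  have hB : 0 ≤ l₀ + l₁ * m₂ + l₂ * κ * m₂ ^ 2 := by
    have h1 := hdom (κ * m₂) (by positivity)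
    have h2 := hdom 0 le_rfl
    have h3 := r_nonneg (Real.sqrt (κ * m₂)) χ
    have h4 := r_nonneg (Real.sqrt 0) χ
    rw [r0] at h1 h2
    nlinarith [sq_nonneg m₂, mul_pos (lt_trans one_pos hκ) hm]
  apply Real.sSup_le _ hB
  rintro x ⟨F, hF, h2, h4, hx⟩
  have hint2 : Integrable (fun b : ℝ => b ^ 2) F := by
    by_contra h; rw [integral_undef h] at h2; exact hm.ne' h2.symm
  have hint4 : Integrable (fun b : ℝ => b ^ 4) F := by
    by_contra h; rw [integral_undef h] at h4
    have : κ * m₂ ^ 2 ≠ 0 := by positivity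
    exact this h4.symm
  have hintr : Integrable (fun b => r b χ) F := by
    refine (integrable_const (2:ℝ)).mono' ((measurable_r χ).aestronglyMeasurable) ?_
    exact Eventually.of_forall fun b => by
      rw [Real.norm_eq_abs, abs_of_nonneg (r_nonneg b χ)]; exact r_le_two b χ
  have hintq : Integrable (fun b : ℝ => l₀ + l₁ * b ^ 2 + l₂ * (b ^ 2) ^ 2) F := by
    have : (fun b : ℝ => l₀ + l₁ * b ^ 2 + l₂ * (b ^ 2) ^ 2)
        = fun b : ℝ => l₀ + l₁ * b ^ 2 + l₂ * b ^ 4 := by ext b; ring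
    rw [this]
    exact ((integrable_const l₀).add (hint2.const_mul l₁)).add (hint4.const_mul l₂)
  have hle : x ≤ ∫ b, (l₀ + l₁ * b ^ 2 + l₂ * (b ^ 2) ^ 2) ∂F := by
    rw [← hx]
    refine integral_mono hintr hintq fun b => ?_
    rw [r_eq_r0_sq b χ]
    exact hdom (b ^ 2) (sq_nonneg b)
  refine hle.trans (le_of_eq ?_)
  have : (fun b : ℝ => l₀ + l₁ * b ^ 2 + l₂ * (b ^ 2) ^ 2)
      = fun b : ℝ => (l₀ + l₁ * b ^ 2) + l₂ * b ^ 4 := by ext b; ring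
  have i1 : Integrable (fun b : ℝ => l₀ + l₁ * b ^ 2) F :=
    (integrable_const l₀).add (hint2.const_mul l₁)
  have i2 : Integrable (fun b : ℝ => l₂ * b ^ 4) F := hint4.const_mul l₂
  rw [this]
  rw [integral_add i1 i2]
  rw [integral_add (integrable_const l₀) (hint2.const_mul l₁)]
  rw [integral_const, integral_const_mul, integral_const_mul, h2, h4, probReal_univ]
  simp only [ENNReal.toReal_one, smul_eq_mul, one_mul]
  ring

noncomputable def g1 (χ t : ℝ) : ℝ :=
  (gaussianPDFReal 0 1 (-χ + Real.sqrt t) - gaussianPDFReal 0 1 (-χ - Real.sqrt t))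
    / (2 * Real.sqrt t)

lemma hasDerivAt_r0 (χ t : ℝ) (ht : 0 < t) :
    HasDerivAt (fun t => r0 t χ) (g1 χ t) t := by
  have hs : HasDerivAt Real.sqrt (1 / (2 * Real.sqrt t)) t := Real.hasDerivAt_sqrt ht.ne'
  have h1 : HasDerivAt (fun t => -χ - Real.sqrt t) (-(1 / (2 * Real.sqrt t))) t := hs.const_sub _
  have h2 : HasDerivAt (fun t => -χ + Real.sqrt t) (1 / (2 * Real.sqrt t)) t := hs.const_add _
  have H1 := (hasDerivAt_Phi (-χ - Real.sqrt t)).comp t h1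
  have H2 := (hasDerivAt_Phi (-χ + Real.sqrt t)).comp t h2
  have := H1.add H2
  have hne : Real.sqrt t ≠ 0 := (Real.sqrt_pos.2 ht).ne'
  refine this.congr_deriv ?_
  unfold g1
  field_simp
  ring

lemma contDiff_pdf : ContDiff ℝ 1 (gaussianPDFReal 0 1) := by
  unfold gaussianPDFReal
  have : ∀ x : ℝ, -(x - 0) ^ 2 / (2 * ((1 : NNReal) : ℝ)) = -(x ^ 2 / 2) := by
    intro x; push_cast; ring
  simp only [this]
  exact contDiff_const.mul ((((contDiff_id.pow 2).div_const 2).neg).exp)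

lemma contDiffAt_g1 (χ x₀ : ℝ) (hx₀ : 0 < x₀) : ContDiffAt ℝ 1 (g1 χ) x₀ := by
  have hs : ContDiffAt ℝ 1 Real.sqrt x₀ := Real.contDiffAt_sqrt hx₀.ne'
  have h1 : ContDiffAt ℝ 1 (fun t => gaussianPDFReal 0 1 (-χ + Real.sqrt t)) x₀ :=
    (contDiff_pdf.contDiffAt).comp x₀ ((contDiffAt_const.add hs))
  have h2 : ContDiffAt ℝ 1 (fun t => gaussianPDFReal 0 1 (-χ - Real.sqrt t)) x₀ :=
    (contDiff_pdf.contDiffAt).comp x₀ ((contDiffAt_const.sub hs))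
  exact (h1.sub h2).div (contDiffAt_const.mul hs) (by positivity)

lemma near_bound (χ x₀ : ℝ) (hx₀ : 0 < x₀) :
    ∃ K ε : ℝ, 0 < ε ∧ ∀ x ∈ Icc (x₀ - ε) (x₀ + ε),
      |r0 x χ - r0 x₀ χ - (x - x₀) * deriv (fun t => r0 t χ) x₀| ≤ K * (x - x₀) ^ 2 := by
  set c := deriv (fun t => r0 t χ) x₀ with hcdef
  have hc : c = g1 χ x₀ := (hasDerivAt_r0 χ x₀ hx₀).deriv
  obtain ⟨K, U, hU, hlip⟩ := (contDiffAt_g1 χ x₀ hx₀).exists_lipschitzOnWith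
  obtain ⟨ε₁, hε₁, hball⟩ := Metric.mem_nhds_iff.1 hU
  refine ⟨K, min (ε₁ / 2) (x₀ / 2), by positivity, ?_⟩
  intro x hx
  set ε := min (ε₁ / 2) (x₀ / 2) with hεdef
  have hεx : ε ≤ x₀ / 2 := min_le_right _ _
  have hIcc_sub : Icc (x₀ - ε) (x₀ + ε) ⊆ U ∩ Ioi 0 := by
    intro y hy
    constructor
    · apply hball
      rw [Metric.mem_ball, Real.dist_eq, abs_lt]
      have h1 := hy.1; have h2 := hy.2
      have : ε ≤ ε₁ / 2 := min_le_left _ _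
      constructor <;> nlinarith
    · have := hy.1; simp only [mem_Ioi]; nlinarith
  have huIcc : uIcc x₀ x ⊆ Icc (x₀ - ε) (x₀ + ε) := by
    apply Set.uIcc_subset_Icc ⟨by nlinarith [hεdef ▸ (by positivity : (0:ℝ) < ε)], by
      nlinarith [hεdef ▸ (by positivity : (0:ℝ) < ε)]⟩ ⟨hx.1, hx.2⟩
  set s : Set ℝ := uIcc x₀ x with hsdef
  have key : ‖(r0 x χ - x * c) - (r0 x₀ χ - x₀ * c)‖ ≤ (K * |x - x₀|) * ‖x - x₀‖ := by
    apply Convex.norm_image_sub_le_of_norm_hasDerivWithin_le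
      (f := fun t => r0 t χ - t * c) (f' := fun t => g1 χ t - c) (s := s)
    · intro t ht
      have htpos : 0 < t := (hIcc_sub (huIcc ht)).2
      exact ((hasDerivAt_r0 χ t htpos).sub (hasDerivAt_mul_const c)).hasDerivWithinAt
    · intro t ht
      have htU : t ∈ U := (hIcc_sub (huIcc ht)).1
      have hx₀U : x₀ ∈ U := (hIcc_sub (huIcc (Set.left_mem_uIcc))).1
      have hd := hlip.dist_le_mul t htU x₀ hx₀U
      rw [Real.dist_eq, Real.dist_eq] at hd
      rw [hc, Real.norm_eq_abs]
      refine hd.trans ?_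
      have habs : |t - x₀| ≤ |x - x₀| := by
        rw [hsdef] at ht
        rcases le_total x₀ x with h | h
        · rw [Set.uIcc_of_le h] at ht
          rw [abs_of_nonneg (by linarith [ht.1]), abs_of_nonneg (by linarith)]
          linarith [ht.2]
        · rw [Set.uIcc_of_ge h] at ht
          rw [abs_of_nonpos (by linarith [ht.2]), abs_of_nonpos (by linarith)]
          linarith [ht.1]
      exact mul_le_mul_of_nonneg_left habs K.coe_nonneg
    · exact convex_uIcc _ _
    · exact Set.left_mem_uIcc
    · exact Set.right_mem_uIcc
  rw [Real.norm_eq_abs, Real.norm_eq_abs] at key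
  calc |r0 x χ - r0 x₀ χ - (x - x₀) * c| = |(r0 x χ - x * c) - (r0 x₀ χ - x₀ * c)| := by
        ring_nf
    _ ≤ (K * |x - x₀|) * |x - x₀| := key
    _ = K * (x - x₀) ^ 2 := by rw [mul_assoc, ← abs_mul, ← sq, abs_sq]


/-- Supremum of the curvature ratio `δ(x; x₀)` of `r₀(·, χ)` relative to its tangent at
`x₀`, over `x ≥ 0`. -/
noncomputable def supδ (x₀ χ : ℝ) : ℝ :=
  sSup {y | ∃ x, 0 ≤ x ∧ x ≠ x₀ ∧
    y = (r0 x χ - r0 x₀ χ - (x - x₀) * deriv (fun t => r0 t χ) x₀) / (x - x₀) ^ 2}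

lemma r0_nonneg (t χ : ℝ) : 0 ≤ r0 t χ := r_nonneg _ _
lemma r0_le_two (t χ : ℝ) : r0 t χ ≤ 2 := r_le_two _ _

lemma bddAbove_delta (χ x₀ : ℝ) (hx₀ : 0 < x₀) :
    BddAbove {y | ∃ x, 0 ≤ x ∧ x ≠ x₀ ∧
      y = (r0 x χ - r0 x₀ χ - (x - x₀) * deriv (fun t => r0 t χ) x₀) / (x - x₀) ^ 2} := by
  obtain ⟨K, ε, hε, hnear⟩ := near_bound χ x₀ hx₀
  set c := deriv (fun t => r0 t χ) x₀ with hcdef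
  refine ⟨max K (4 / ε ^ 2 + |c| / ε), ?_⟩
  rintro y ⟨x, hx0, hxne, rfl⟩
  have hsq : (0:ℝ) < (x - x₀) ^ 2 := by
    have : x - x₀ ≠ 0 := sub_ne_zero.2 hxne
    positivity
  rcases le_or_gt |x - x₀| ε with hle | hgt
  · refine le_trans ?_ (le_max_left _ _)
    rw [div_le_iff₀ hsq]
    have hxIcc : x ∈ Icc (x₀ - ε) (x₀ + ε) := by
      rw [abs_le] at hle; constructor <;> linarith [hle.1, hle.2]
    calc r0 x χ - r0 x₀ χ - (x - x₀) * c
        ≤ |r0 x χ - r0 x₀ χ - (x - x₀) * c| := le_abs_self _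
      _ ≤ K * (x - x₀) ^ 2 := hnear x hxIcc
  · refine le_trans ?_ (le_max_right _ _)
    rw [div_le_iff₀ hsq]
    have h1 : r0 x χ ≤ 2 := r0_le_two _ _
    have h2 : 0 ≤ r0 x₀ χ := r0_nonneg _ _
    have h3 : -((x - x₀) * c) ≤ |x - x₀| * |c| := by
      rw [← abs_mul]; exact neg_le_abs _
    have h4 : ε ^ 2 ≤ (x - x₀) ^ 2 := by
      rw [← sq_abs (x - x₀)]; exact pow_le_pow_left₀ hε.le hgt.le 2
    have h5 : |x - x₀| * ε ≤ (x - x₀) ^ 2 := by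
      rw [← sq_abs (x - x₀), sq]
      exact mul_le_mul_of_nonneg_left hgt.le (abs_nonneg _)
    have hcnn : 0 ≤ |c| := abs_nonneg c
    have : 4 ≤ 4 / ε ^ 2 * (x - x₀) ^ 2 := by
      rw [div_mul_eq_mul_div, le_div_iff₀ (by positivity)]; nlinarith
    have h6 : |x - x₀| * |c| ≤ |c| / ε * (x - x₀) ^ 2 := by
      rw [div_mul_eq_mul_div, le_div_iff₀ hε]; nlinarith
    nlinarith

/-- Duality upper bound for the fourth-moment problem: any quadratic dominating
`r₀(·, χ)` on `[0, ∞)` bounds the worst-case non-coverage; in particular the tangent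
quadratic at `x₀` yields the stated bound. -/
theorem duality_upper_bound (χ m₂ κ l₀ l₁ l₂ x₀ : ℝ) (hm : 0 < m₂) (hκ : 1 < κ)
    (hx₀ : 0 < x₀)
    (hdom : ∀ t, 0 ≤ t → r0 t χ ≤ l₀ + l₁ * t + l₂ * t ^ 2) :
    ρ₄ m₂ κ χ ≤ l₀ + l₁ * m₂ + l₂ * κ * m₂ ^ 2 ∧
    ρ₄ m₂ κ χ ≤ r0 x₀ χ + (m₂ - x₀) * deriv (fun t => r0 t χ) x₀ +
      ((x₀ - m₂) ^ 2 + (κ - 1) * m₂ ^ 2) * supδ x₀ χ := by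
  refine ⟨lemA χ m₂ κ l₀ l₁ l₂ hm hκ hdom, ?_⟩
  set c := deriv (fun t => r0 t χ) x₀ with hcdef
  set sδ := supδ x₀ χ with hsdef
  have hdom2 : ∀ t, 0 ≤ t → r0 t χ ≤
      (r0 x₀ χ - x₀ * c + x₀ ^ 2 * sδ) + (c - 2 * x₀ * sδ) * t + sδ * t ^ 2 := by
    intro t ht
    have key : r0 t χ ≤ r0 x₀ χ + (t - x₀) * c + sδ * (t - x₀) ^ 2 := by
      by_cases h : t = x₀
      · subst h; simp
      · have hδ : (r0 t χ - r0 x₀ χ - (t - x₀) * c) / (t - x₀) ^ 2 ≤ sδ := by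
          rw [hsdef, supδ]
          exact le_csSup (bddAbove_delta χ x₀ hx₀) ⟨t, ht, h, rfl⟩
        have hsq : (0:ℝ) < (t - x₀) ^ 2 := by
          have : t - x₀ ≠ 0 := sub_ne_zero.2 h
          positivity
        rw [div_le_iff₀ hsq] at hδ
        linarith
    exact key.trans (le_of_eq (by ring))
  have := lemA χ m₂ κ _ _ _ hm hκ hdom2
  exact this.trans (le_of_eq (by ring))
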